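/- Let y(x,z,v) be the unique maximizer of F(x,·,z,v) over Y. Then y(x,z,v) is σ₅-Lipschitz in v with σ₅ = r₂/(r₂−L_y): ‖y(x,z,v) − y(x,z,v')‖ ≤ σ₅‖v−v'‖ for all v, v' ∈ ℝᵈ. -/

import Mathlib

open scoped RealInnerProductSpace
open InnerProductSpace

lemma grad_quad' {D : Type*} [NormedAddCommGroup D] [InnerProductSpace ℝ D] [CompleteSpace D]
    (v y₀ : D) (c : ℝ) :
    HasGradientAt (fun y : D => c / 2 * ‖y - v‖ ^ 2) (c • (y₀ - v)) y₀ := by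
  rw [hasGradientAt_iff_hasFDerivAt]
  have hid : HasFDerivAt (fun y : D => y - v) (ContinuousLinearMap.id ℝ D) y₀ :=
    (hasFDerivAt_id y₀).sub_const v
  have h := (hid.inner ℝ hid).const_mul (c / 2)
  convert h using 1
  · rfl
  · funext y
    rw [real_inner_self_eq_norm_sq]
  · ext w
    simp [fderivInnerCLM_apply, real_inner_smul_left, inner_sub_left, inner_sub_right,
      real_inner_comm]
    ring

lemma grad_sub' {D : Type*} [NormedAddCommGroup D] [InnerProductSpace ℝ D] [CompleteSpace D]
    {φ ψ : D → ℝ} {g h a : D} (hφ : HasGradientAt φ g a) (hψ : HasGradientAt ψ h a) :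
    HasGradientAt (fun y => φ y - ψ y) (g - h) a := by
  rw [hasGradientAt_iff_hasFDerivAt] at *
  rw [map_sub]; exact hφ.sub hψ

lemma grad_add_const' {D : Type*} [NormedAddCommGroup D] [InnerProductSpace ℝ D] [CompleteSpace D]
    {φ : D → ℝ} {g a : D} (c : ℝ) (hφ : HasGradientAt φ g a) :
    HasGradientAt (fun y => φ y + c) g a := by
  rw [hasGradientAt_iff_hasFDerivAt] at *
  exact hφ.add_const c

lemma first_order' {D : Type*} [NormedAddCommGroup D] [InnerProductSpace ℝ D] [CompleteSpace D]
    (φ : D → ℝ) (g : D) (s : Set D) (hconv : Convex ℝ s) (a : D) (ha : a ∈ s)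
    (hmax : IsMaxOn φ s a) (hg : HasGradientAt φ g a) :
    ∀ b ∈ s, ⟪g, b - a⟫ ≤ 0 := by
  intro b hb
  have hcone : b - a ∈ posTangentConeAt s a :=
    sub_mem_posTangentConeAt_of_segment_subset (hconv.segment_subset ha hb)
  have := hmax.localize.hasFDerivWithinAt_nonpos
    (hg.hasFDerivAt.hasFDerivWithinAt) hcone
  simpa using this

/-- the maximizer `y(x,z,v)` of `F(x,·,z,v)` over the compact
convex set `Y` is `σ₅`-Lipschitz in `v` with `σ₅ = r₂/(r₂ − L_y)`. -/
theorem stmt_5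
    {E D : Type*} [NormedAddCommGroup E] [InnerProductSpace ℝ E] [CompleteSpace E]
    [NormedAddCommGroup D] [InnerProductSpace ℝ D] [CompleteSpace D]
    (f : E → D → ℝ) (gx : E → D → E) (gy : E → D → D) (Lx Ly r₁ r₂ : ℝ)
    (hr₁ : r₁ > Lx) (hr₂ : r₂ > Ly)
    (X : Set E) (Y : Set D)
    (hXc : IsCompact X) (hXconv : Convex ℝ X) (hXne : X.Nonempty)
    (hYc : IsCompact Y) (hYconv : Convex ℝ Y) (hYne : Y.Nonempty)
    (hgradx : ∀ x y, HasGradientAt (fun x' => f x' y) (gx x y) x)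
    (hgrady : ∀ x y, HasGradientAt (fun y' => f x y') (gy x y) y)
    (hLipx : ∀ x x' y y', ‖gx x y - gx x' y'‖ ≤ Lx * (‖x - x'‖ + ‖y - y'‖))
    (hLipy : ∀ x x' y y', ‖gy x y - gy x' y'‖ ≤ Ly * (‖x - x'‖ + ‖y - y'‖))
    (F : E → D → E → D → ℝ)
    (hF : ∀ x y z v, F x y z v
      = f x y + r₁ / 2 * ‖x - z‖ ^ 2 - r₂ / 2 * ‖y - v‖ ^ 2)
    (ym : E → E → D → D)
    (hym : ∀ x z v, ym x z v ∈ Y ∧ IsMaxOn (fun y => F x y z v) Y (ym x z v)) :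
    ∀ x ∈ X, ∀ (z : E) (v v' : D),
      ‖ym x z v - ym x z v'‖ ≤ r₂ / (r₂ - Ly) * ‖v - v'‖ := by
  intro x hx z v v'
  by_cases hvv : v = v'
  · simp [hvv]
  have hgF : ∀ (w : D) (a : D),
      HasGradientAt (fun y => F x y z w) (gy x a - r₂ • (a - w)) a := by
    intro w a
    have heq : (fun y => F x y z w)
        = fun y => (f x y + r₁ / 2 * ‖x - z‖ ^ 2) - r₂ / 2 * ‖y - w‖ ^ 2 := by
      funext y; rw [hF]
    rw [heq]
    exact grad_sub' (grad_add_const' _ (hgrady x a)) (grad_quad' w a r₂)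
  set y₁ := ym x z v with hy₁
  set y₂ := ym x z v' with hy₂
  have h1 := first_order' (fun y => F x y z v) (gy x y₁ - r₂ • (y₁ - v)) Y hYconv y₁
    (hym x z v).1 (hym x z v).2 (hgF v y₁) y₂ (hym x z v').1
  have h2 := first_order' (fun y => F x y z v') (gy x y₂ - r₂ • (y₂ - v')) Y hYconv y₂
    (hym x z v').1 (hym x z v').2 (hgF v' y₂) y₁ (hym x z v).1
  have hD : (0:ℝ) < ‖v - v'‖ := by
    rw [norm_pos_iff]; exact sub_ne_zero_of_ne hvv
  have hLy : 0 ≤ Ly := by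
    have := hLipy x x v v'
    have h0 : (0:ℝ) ≤ Ly * (‖x - x‖ + ‖v - v'‖) := le_trans (norm_nonneg _) this
    simp only [sub_self, norm_zero, zero_add] at h0
    nlinarith
  have hr₂0 : 0 < r₂ := lt_of_le_of_lt hLy hr₂
  have hsum : r₂ * ‖y₁ - y₂‖ ^ 2
      ≤ ⟪gy x y₁ - gy x y₂, y₁ - y₂⟫ + r₂ * ⟪v - v', y₁ - y₂⟫ := by
    have e1 : ⟪gy x y₁ - r₂ • (y₁ - v), y₂ - y₁⟫
        = ⟪gy x y₁, y₂ - y₁⟫ - r₂ * ⟪y₁ - v, y₂ - y₁⟫ := by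
      rw [inner_sub_left, real_inner_smul_left]
    have e2 : ⟪gy x y₂ - r₂ • (y₂ - v'), y₁ - y₂⟫
        = ⟪gy x y₂, y₁ - y₂⟫ - r₂ * ⟪y₂ - v', y₁ - y₂⟫ := by
      rw [inner_sub_left, real_inner_smul_left]
    rw [e1] at h1; rw [e2] at h2
    have k1 : ⟪gy x y₁, y₂ - y₁⟫ = - ⟪gy x y₁, y₁ - y₂⟫ := by
      rw [← inner_neg_right]; congr 1; abel
    have k2 : ⟪y₁ - v, y₂ - y₁⟫ = - ⟪y₁ - v, y₁ - y₂⟫ := by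
      rw [← inner_neg_right]; congr 1; abel
    have k3 : ⟪gy x y₁ - gy x y₂, y₁ - y₂⟫
        = ⟪gy x y₁, y₁ - y₂⟫ - ⟪gy x y₂, y₁ - y₂⟫ := inner_sub_left _ _ _
    have k4 : ⟪y₁ - v, y₁ - y₂⟫ - ⟪y₂ - v', y₁ - y₂⟫
        = ‖y₁ - y₂‖ ^ 2 - ⟪v - v', y₁ - y₂⟫ := by
      rw [← @real_inner_self_eq_norm_sq, ← inner_sub_left, ← inner_sub_left]
      congr 1; abel
    rw [k1, k2] at h1
    nlinarith [h1, h2, k3, k4]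
  have cs1 : ⟪gy x y₁ - gy x y₂, y₁ - y₂⟫ ≤ Ly * ‖y₁ - y₂‖ ^ 2 := by
    calc ⟪gy x y₁ - gy x y₂, y₁ - y₂⟫ ≤ ‖gy x y₁ - gy x y₂‖ * ‖y₁ - y₂‖ :=
          real_inner_le_norm _ _
      _ ≤ (Ly * (‖x - x‖ + ‖y₁ - y₂‖)) * ‖y₁ - y₂‖ :=
          mul_le_mul_of_nonneg_right (hLipy x x y₁ y₂) (norm_nonneg _)
      _ = Ly * ‖y₁ - y₂‖ ^ 2 := by
          simp only [sub_self, norm_zero, zero_add]; ring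
  have cs2 : ⟪v - v', y₁ - y₂⟫ ≤ ‖v - v'‖ * ‖y₁ - y₂‖ := real_inner_le_norm _ _
  have key : (r₂ - Ly) * ‖y₁ - y₂‖ ^ 2 ≤ r₂ * (‖v - v'‖ * ‖y₁ - y₂‖) := by
    nlinarith [hsum, cs1, cs2, hr₂0.le]
  have hrl : 0 < r₂ - Ly := sub_pos.mpr hr₂
  by_cases hy0 : ‖y₁ - y₂‖ = 0
  · rw [hy0]; positivity
  · have hy0' : 0 < ‖y₁ - y₂‖ := lt_of_le_of_ne (norm_nonneg _) (Ne.symm hy0)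
    rw [div_mul_eq_mul_div, le_div_iff₀ hrl]
    nlinarith [key, hy0']
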